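/- arXiv:1504.02250 — 2 statements merged into one kernel-verified Lean document; each statement's English description precedes it below -/
import Mathlib

section
/- Let G be a bipartite graph and E a set of edges. The following are equivalent: (i) some maximum independent set of G has an E-good accessibility ordering; (ii) G has a maximum matching M that is uniquely restricted and satisfies M ⊆ E; (iii) every maximum independent set of G has an E-good accessibility ordering. -/
variable {V : Type*}

/-- `M` is a matching in `G`: a set of edges of `G` that are pairwise disjoint. -/
def IsMatchingSet (G : SimpleGraph V) (M : Set (Sym2 V)) : Prop :=
  M ⊆ G.edgeSet ∧ ∀ e ∈ M, ∀ f ∈ M, e ≠ f → ∀ v : V, v ∈ e → v ∉ f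

/-- `V(M)`: the set of vertices covered by the matching `M`. -/
def matVerts (M : Set (Sym2 V)) : Set V := {v | ∃ e ∈ M, v ∈ e}

/-- `M` is a maximum matching in `G`. -/
def IsMaximumMatching (G : SimpleGraph V) (M : Set (Sym2 V)) : Prop :=
  IsMatchingSet G M ∧ ∀ M', IsMatchingSet G M' → M'.ncard ≤ M.ncard

/-- `M` is uniquely restricted: no matching distinct from `M` covers the same vertices. -/
def UniquelyRestricted (G : SimpleGraph V) (M : Set (Sym2 V)) : Prop :=
  ∀ M', IsMatchingSet G M' → matVerts M' = matVerts M → M' = M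

/-- `M` is a perfect matching of `G`. -/
def IsPerfectMatchingSet (G : SimpleGraph V) (M : Set (Sym2 V)) : Prop :=
  IsMatchingSet G M ∧ matVerts M = Set.univ

/-- `A, B` form a bipartition of `G`. -/
def IsBipartition (G : SimpleGraph V) (A B : Set V) : Prop :=
  Disjoint A B ∧ A ∪ B = Set.univ ∧
    ∀ ⦃u v : V⦄, G.Adj u v → (u ∈ A ∧ v ∈ B) ∨ (u ∈ B ∧ v ∈ A)

/-- `I` is an independent set in `G`. -/
def IsIndepSet (G : SimpleGraph V) (I : Set V) : Prop :=
  ∀ u ∈ I, ∀ v ∈ I, ¬ G.Adj u v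

/-- `I` is a maximum independent set in `G`. -/
def IsMaximumIndepSet (G : SimpleGraph V) (I : Set V) : Prop :=
  IsIndepSet G I ∧ ∀ J, IsIndepSet G J → J.ncard ≤ I.ncard

/-- The arcs of the digraph `D(M)`: edges not in `M` oriented from `A` to `B`,
edges of `M` oriented from `B` to `A`. -/
def DMarc (G : SimpleGraph V) (A B : Set V) (M : Set (Sym2 V)) (u v : V) : Prop :=
  G.Adj u v ∧ ((u ∈ A ∧ v ∈ B ∧ s(u, v) ∉ M) ∨ (u ∈ B ∧ v ∈ A ∧ s(u, v) ∈ M))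

/-- The digraph `D(M)` is acyclic. -/
def DMAcyclic (G : SimpleGraph V) (A B : Set V) (M : Set (Sym2 V)) : Prop :=
  ∀ v : V, ¬ Relation.TransGen (DMarc G A B M) v v

/-- `V⁺(M)`: vertices reachable in `D(M)` from an `A`-vertex uncovered by `M`. -/
def Vplus (G : SimpleGraph V) (A B : Set V) (M : Set (Sym2 V)) : Set V :=
  {v | ∃ a ∈ A, a ∉ matVerts M ∧ Relation.ReflTransGen (DMarc G A B M) a v}

/-- `V⁻(M)`: vertices from which a `B`-vertex uncovered by `M` is reachable in `D(M)`. -/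
def Vminus (G : SimpleGraph V) (A B : Set V) (M : Set (Sym2 V)) : Set V :=
  {v | ∃ b ∈ B, b ∉ matVerts M ∧ Relation.ReflTransGen (DMarc G A B M) v b}

/-- Given a linear ordering `l` of an independent set, `Mσ G l` is the set of edges
`y·p(y)` where `p(y)` is the first vertex of `l` adjacent to `y`. -/
def Msigma (G : SimpleGraph V) (l : List V) : Set (Sym2 V) :=
  {e | ∃ (i : Fin l.length) (y : V), e = s(y, l.get i) ∧ G.Adj (l.get i) y ∧
      ∀ j : Fin l.length, (j : ℕ) < (i : ℕ) → ¬ G.Adj (l.get j) y}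

/-- `l` is an accessibility ordering of `I`: it enumerates `I` without repetition
and `Mσ` is a matching. -/
def IsAccessibilityOrdering (G : SimpleGraph V) (I : Set V) (l : List V) : Prop :=
  l.Nodup ∧ {v | v ∈ l} = I ∧ IsMatchingSet G (Msigma G l)

/-- A partial accessibility ordering: an accessibility ordering of a subset of `I`. -/
def IsPartialAccessibilityOrdering (G : SimpleGraph V) (I : Set V) (l : List V) : Prop :=
  l.Nodup ∧ {v | v ∈ l} ⊆ I ∧ IsMatchingSet G (Msigma G l)

/-- `c` is an `M`-alternating cycle: of every two adjacent edges exactly one is in `M`. -/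
def IsAlternatingCycle (G : SimpleGraph V) (M : Set (Sym2 V)) {v : V} (c : G.Walk v v) : Prop :=
  c.IsCycle ∧ (c.edges ++ c.edges.take 1).Chain' (fun e f => e ∈ M ↔ f ∉ M)

/-- `M'` arises from `M` by a single edge exchange. -/
def EdgeExchange (G : SimpleGraph V) (A B : Set V) (M M' : Set (Sym2 V)) : Prop :=
  (∃ a a' b' : V, a ∈ A ∧ a ∉ matVerts M ∧ s(a', b') ∈ M ∧ G.Adj a b' ∧
      M' = (M \ {s(a', b')}) ∪ {s(a, b')}) ∨
  (∃ b a' b' : V, b ∈ B ∧ b ∉ matVerts M ∧ s(a', b') ∈ M ∧ G.Adj a' b ∧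
      M' = (M \ {s(a', b')}) ∪ {s(a', b)})

-- ### helper lemmas

lemma matching_unique {G : SimpleGraph V} {M : Set (Sym2 V)} (hM : IsMatchingSet G M)
    {e f : Sym2 V} {v : V} (he : e ∈ M) (hf : f ∈ M) (hv : v ∈ e) (hv' : v ∈ f) : e = f := by
  by_contra hne
  exact hM.2 e he f hf hne v hv hv'

lemma bip_symm {G : SimpleGraph V} {A B : Set V} (h : IsBipartition G A B) :
    IsBipartition G B A :=
  ⟨h.1.symm, by rw [Set.union_comm]; exact h.2.1, fun u v huv => (h.2.2 huv).symm⟩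

lemma bip_not_adj {G : SimpleGraph V} {A B : Set V} (h : IsBipartition G A B)
    {u v : V} (hu : u ∈ A) (hv : v ∈ A) : ¬ G.Adj u v := by
  intro hadj
  rcases h.2.2 hadj with ⟨_, h2⟩ | ⟨h1, _⟩
  · exact h.1.le_bot ⟨hv, h2⟩
  · exact h.1.le_bot ⟨hu, h1⟩

open Classical in
noncomputable def pickOut (I : Set V) (e : Sym2 V) : V :=
  if h : ∃ v, v ∈ e ∧ v ∉ I then h.choose else (Quot.out e).1

lemma pickOut_spec {I : Set V} {e : Sym2 V} (h : ∃ v, v ∈ e ∧ v ∉ I) :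
    pickOut I e ∈ e ∧ pickOut I e ∉ I := by
  rw [pickOut]
  rw [dif_pos h]
  exact h.choose_spec

lemma matching_edge_out {G : SimpleGraph V} {M : Set (Sym2 V)} {I : Set V}
    (hM : IsMatchingSet G M) (hI : IsIndepSet G I) {e : Sym2 V} (he : e ∈ M) :
    ∃ v, v ∈ e ∧ v ∉ I := by
  induction e using Sym2.ind with
  | _ u w =>
    have hadj : G.Adj u w := (SimpleGraph.mem_edgeSet G).mp (hM.1 he)
    by_contra hc
    push_neg at hc
    exact hI u (hc u (by simp)) w (hc w (by simp [Sym2.mem_iff])) hadj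

lemma matching_ncard_le [Fintype V] {G : SimpleGraph V} {M : Set (Sym2 V)} {I : Set V}
    (hM : IsMatchingSet G M) (hI : IsIndepSet G I) : M.ncard ≤ Iᶜ.ncard := by
  have hinj : Set.InjOn (pickOut I) M := by
    intro e he f hf hef
    have h1 := pickOut_spec (matching_edge_out hM hI he)
    have h2 := pickOut_spec (matching_edge_out hM hI hf)
    exact matching_unique hM he hf h1.1 (hef ▸ h2.1)
  calc M.ncard = (pickOut I '' M).ncard := (Set.ncard_image_of_injOn hinj).symm
    _ ≤ Iᶜ.ncard := by
        apply Set.ncard_le_ncard _ (Set.toFinite _)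
        rintro v ⟨e, he, rfl⟩
        exact (pickOut_spec (matching_edge_out hM hI he)).2

lemma max_indep_neighbor [Fintype V] {G : SimpleGraph V} {I : Set V}
    (hI : IsMaximumIndepSet G I) {y : V} (hy : y ∉ I) : ∃ x ∈ I, G.Adj x y := by
  by_contra hc
  push_neg at hc
  have hind : IsIndepSet G (insert y I) := by
    intro u hu v hv hadj
    rcases Set.mem_insert_iff.mp hu with rfl | hu'
    · rcases Set.mem_insert_iff.mp hv with rfl | hv'
      · exact G.irrefl hadj
      · exact hc v hv' hadj.symm
    · rcases Set.mem_insert_iff.mp hv with rfl | hv'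
      · exact hc u hu' hadj
      · exact hI.1 u hu' v hv' hadj
  have := hI.2 _ hind
  rw [Set.ncard_insert_of_notMem hy (Set.toFinite _)] at this
  omega

lemma exists_max_indep [Fintype V] (G : SimpleGraph V) : ∃ I, IsMaximumIndepSet G I := by
  classical
  have hbound : ∀ J : Set V, IsIndepSet G J → J.ncard ≤ Fintype.card V := by
    intro J _
    calc J.ncard ≤ (Set.univ : Set V).ncard := Set.ncard_le_ncard (Set.subset_univ J) (Set.toFinite _)
      _ = Fintype.card V := by rw [Set.ncard_univ, Nat.card_eq_fintype_card]
  set P : ℕ → Prop := fun n => ∃ J : Set V, IsIndepSet G J ∧ J.ncard = n with hP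
  have h0 : P 0 := ⟨∅, fun u hu => absurd hu (Set.notMem_empty u), Set.ncard_empty V⟩
  obtain ⟨I, hI, hIcard⟩ := Nat.findGreatest_spec (P := P) (Nat.zero_le _) h0
  refine ⟨I, hI, fun J hJ => ?_⟩
  rw [hIcard]
  exact Nat.le_findGreatest (hbound J hJ) ⟨J, hJ, rfl⟩

lemma exists_least_adj (G : SimpleGraph V) (l : List V) (y : V)
    (h : ∃ i : Fin l.length, G.Adj (l.get i) y) :
    ∃ i : Fin l.length, G.Adj (l.get i) y ∧
      ∀ j : Fin l.length, (j : ℕ) < (i : ℕ) → ¬ G.Adj (l.get j) y := by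
  classical
  obtain ⟨i₀, hi₀⟩ := h
  have hex : ∃ n : ℕ, ∃ hn : n < l.length, G.Adj (l.get ⟨n, hn⟩) y := ⟨i₀, i₀.2, hi₀⟩
  obtain ⟨hn, hadj⟩ := Nat.find_spec hex
  refine ⟨⟨Nat.find hex, hn⟩, hadj, fun j hj hadj' => ?_⟩
  exact Nat.find_min hex hj ⟨j.2, by simpa using hadj'⟩

lemma hall_side [Fintype V] {G : SimpleGraph V} {A B : Set V} (hbip : IsBipartition G A B)
    {I : Set V} (hI : IsMaximumIndepSet G I) :
    ∃ f : {y : V // y ∈ A ∧ y ∉ I} → V, Function.Injective f ∧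
      ∀ y, f y ∈ I ∧ f y ∈ B ∧ G.Adj y.1 (f y) := by
  classical
  set t : {y : V // y ∈ A ∧ y ∉ I} → Finset V :=
    fun y => Set.toFinset {x | x ∈ I ∧ x ∈ B ∧ G.Adj y.1 x} with ht
  have hmem : ∀ y x, x ∈ t y ↔ (x ∈ I ∧ x ∈ B ∧ G.Adj y.1 x) := by
    intro y x
    rw [ht]
    simp only [Set.mem_toFinset, Set.mem_setOf_eq]
  have hall : ∀ s : Finset {y : V // y ∈ A ∧ y ∉ I}, s.card ≤ (s.biUnion t).card := by
    intro s
    by_contra hlt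
    push_neg at hlt
    set T : Set V := ↑(s.biUnion t) with hT
    set S : Set V := Subtype.val '' (↑s : Set {y : V // y ∈ A ∧ y ∉ I}) with hS
    have hTmem : ∀ x, x ∈ T ↔ ∃ y ∈ s, x ∈ I ∧ x ∈ B ∧ G.Adj y.1 x := by
      intro x
      rw [hT]
      simp only [Finset.coe_biUnion, Set.mem_iUnion, Finset.mem_coe]
      constructor
      · rintro ⟨y, hy, hx⟩; exact ⟨y, hy, (hmem y x).mp hx⟩
      · rintro ⟨y, hy, hx⟩; exact ⟨y, hy, (hmem y x).mpr hx⟩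
    have hTI : T ⊆ I := by
      intro x hx
      obtain ⟨y, _, h⟩ := (hTmem x).mp hx
      exact h.1
    have hSA : S ⊆ A := by rintro x ⟨y, _, rfl⟩; exact y.2.1
    have hSI : ∀ x ∈ S, x ∉ I := by rintro x ⟨y, _, rfl⟩; exact y.2.2
    set J : Set V := (I \ T) ∪ S with hJ
    have key : ∀ u v, u ∈ I \ T → v ∈ S → ¬ G.Adj u v := by
      intro u v hu hv hadj
      obtain ⟨yv, hyv, hyveq⟩ := hv
      have hvA : v ∈ A := hyveq ▸ yv.2.1
      have huB : u ∈ B := by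
        rcases hbip.2.2 hadj with ⟨_, h2⟩ | ⟨h1, _⟩
        · exact absurd (hbip.1.le_bot ⟨hvA, h2⟩) (by simp)
        · exact h1
      have : u ∈ T := (hTmem u).mpr ⟨yv, hyv, hu.1, huB, by rw [hyveq]; exact hadj.symm⟩
      exact hu.2 this
    have hJind : IsIndepSet G J := by
      intro u hu v hv hadj
      rcases hu with hu | hu <;> rcases hv with hv | hv
      · exact hI.1 u hu.1 v hv.1 hadj
      · exact key u v hu hv hadj
      · exact key v u hv hu hadj.symm
      · exact bip_not_adj hbip (hSA hu) (hSA hv) hadj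
    have hcard : I.ncard < J.ncard := by
      have hdisj : Disjoint (I \ T) S := by
        rw [Set.disjoint_left]
        rintro x hx hxS
        exact hSI x hxS hx.1
      have h1 : J.ncard = (I \ T).ncard + S.ncard :=
        Set.ncard_union_eq hdisj (Set.toFinite _) (Set.toFinite _)
      have h2 : (I \ T).ncard = I.ncard - T.ncard := Set.ncard_diff hTI (Set.toFinite _)
      have h3 : S.ncard = s.card := by
        rw [hS, Set.ncard_image_of_injOn Subtype.val_injective.injOn,
          Set.ncard_coe_finset]
      have h4 : T.ncard = (s.biUnion t).card := by rw [hT, Set.ncard_coe_finset]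
      have h5 : T.ncard ≤ I.ncard := Set.ncard_le_ncard hTI (Set.toFinite _)
      omega
    exact absurd (hI.2 J hJind) (by omega)
  obtain ⟨f, hfinj, hf⟩ := (Finset.all_card_le_biUnion_card_iff_exists_injective t).mp hall
  exact ⟨f, hfinj, fun y => (hmem y (f y)).mp (hf y)⟩

lemma cover_lemma [Fintype V] {G : SimpleGraph V} {A B : Set V} (hbip : IsBipartition G A B)
    {I : Set V} (hI : IsMaximumIndepSet G I) {M : Set (Sym2 V)}
    (hM : IsMaximumMatching G M) :
    (∀ y, y ∉ I → ∃ x, x ∈ I ∧ s(y, x) ∈ M) ∧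
      (∀ e ∈ M, ∃ y x, y ∉ I ∧ x ∈ I ∧ e = s(y, x)) := by
  classical
  obtain ⟨fA, hfAinj, hfA⟩ := hall_side hbip hI
  obtain ⟨fB, hfBinj, hfB⟩ := hall_side (bip_symm hbip) hI
  set m : V → V := fun y =>
    if h : y ∈ A ∧ y ∉ I then fA ⟨y, h⟩ else if h' : y ∈ B ∧ y ∉ I then fB ⟨y, h'⟩ else y
    with hm
  have hbranch : ∀ y, y ∉ I →
      (m y ∈ I ∧ G.Adj y (m y)) ∧ ((y ∈ A ∧ m y ∈ B) ∨ (y ∈ B ∧ m y ∈ A)) := by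
    intro y hy
    by_cases h : y ∈ A
    · have h1 : y ∈ A ∧ y ∉ I := ⟨h, hy⟩
      have : m y = fA ⟨y, h1⟩ := by rw [hm]; simp only [dif_pos h1]
      rw [this]
      exact ⟨⟨(hfA ⟨y, h1⟩).1, (hfA ⟨y, h1⟩).2.2⟩, Or.inl ⟨h, (hfA ⟨y, h1⟩).2.1⟩⟩
    · have hB : y ∈ B := by
        rcases (Set.mem_union y A B).mp (by rw [hbip.2.1]; trivial) with h' | h'
        · exact absurd h' h
        · exact h'
      have h1 : ¬ (y ∈ A ∧ y ∉ I) := fun hc => h hc.1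
      have h2 : y ∈ B ∧ y ∉ I := ⟨hB, hy⟩
      have : m y = fB ⟨y, h2⟩ := by rw [hm]; simp only [dif_neg h1, dif_pos h2]
      rw [this]
      exact ⟨⟨(hfB ⟨y, h2⟩).1, (hfB ⟨y, h2⟩).2.2⟩, Or.inr ⟨hB, (hfB ⟨y, h2⟩).2.1⟩⟩
  have hminj : Set.InjOn m Iᶜ := by
    intro y hy y' hy' heq
    rcases (hbranch y hy).2 with ⟨hyA, hmyB⟩ | ⟨hyB, hmyA⟩ <;>
      rcases (hbranch y' hy').2 with ⟨hyA', hmyB'⟩ | ⟨hyB', hmyA'⟩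
    · have h1 : y ∈ A ∧ y ∉ I := ⟨hyA, hy⟩
      have h1' : y' ∈ A ∧ y' ∉ I := ⟨hyA', hy'⟩
      have e1 : m y = fA ⟨y, h1⟩ := by rw [hm]; simp only [dif_pos h1]
      have e2 : m y' = fA ⟨y', h1'⟩ := by rw [hm]; simp only [dif_pos h1']
      rw [e1, e2] at heq
      exact congrArg Subtype.val (hfAinj heq)
    · exact absurd (hbip.1.le_bot ⟨heq ▸ hmyA', hmyB⟩) (by simp)
    · exact absurd (hbip.1.le_bot ⟨hmyA, heq ▸ hmyB'⟩) (by simp)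
    · have h1 : ¬ (y ∈ A ∧ y ∉ I) := fun hc => absurd (hbip.1.le_bot ⟨hc.1, hyB⟩) (by simp)
      have h2 : y ∈ B ∧ y ∉ I := ⟨hyB, hy⟩
      have h1' : ¬ (y' ∈ A ∧ y' ∉ I) := fun hc => absurd (hbip.1.le_bot ⟨hc.1, hyB'⟩) (by simp)
      have h2' : y' ∈ B ∧ y' ∉ I := ⟨hyB', hy'⟩
      have e1 : m y = fB ⟨y, h2⟩ := by rw [hm]; simp only [dif_neg h1, dif_pos h2]
      have e2 : m y' = fB ⟨y', h2'⟩ := by rw [hm]; simp only [dif_neg h1', dif_pos h2']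
      rw [e1, e2] at heq
      exact congrArg Subtype.val (hfBinj heq)
  -- the matching M₀ saturating Iᶜ
  set M₀ : Set (Sym2 V) := (fun y => s(y, m y)) '' Iᶜ with hM₀
  have hM₀match : IsMatchingSet G M₀ := by
    constructor
    · rintro e ⟨y, hy, rfl⟩
      exact (SimpleGraph.mem_edgeSet G).mpr (hbranch y hy).1.2
    · rintro e ⟨y, hy, rfl⟩ f ⟨y', hy', rfl⟩ hne v hv hv'
      rcases Sym2.mem_iff.mp hv with rfl | rfl <;> rcases Sym2.mem_iff.mp hv' with h | h
      · exact hne (by rw [h])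
      · exact hy ((h ▸ (hbranch y' hy').1.1))
      · exact hy' (h ▸ (hbranch y hy).1.1)
      · exact hne (by rw [hminj hy hy' h])
  have hM₀card : M₀.ncard = Iᶜ.ncard := by
    rw [hM₀]
    apply Set.ncard_image_of_injOn
    intro y hy y' hy' heq
    rcases Sym2.eq_iff.mp heq with ⟨h1, _⟩ | ⟨h1, h2⟩
    · exact h1
    · exact absurd ((h1 ▸ (hbranch y' hy').1.1)) hy
  have hMcard : M.ncard = Iᶜ.ncard := by
    refine le_antisymm (matching_ncard_le hM.1 hI.1) ?_
    rw [← hM₀card]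
    exact hM.2 M₀ hM₀match
  -- pickOut is a bijection from M to Iᶜ
  have hpickmem : ∀ e ∈ M, pickOut I e ∈ e ∧ pickOut I e ∉ I :=
    fun e he => pickOut_spec (matching_edge_out hM.1 hI.1 he)
  have himg : pickOut I '' M = Iᶜ := by
    apply Set.eq_of_subset_of_ncard_le
    · rintro v ⟨e, he, rfl⟩
      exact (hpickmem e he).2
    · have hinj : Set.InjOn (pickOut I) M := by
        intro e he f hf hef
        exact matching_unique hM.1 he hf (hpickmem e he).1 (hef ▸ (hpickmem f hf).1)
      rw [Set.ncard_image_of_injOn hinj, hMcard]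
    · exact Set.toFinite _
  have claim2 : ∀ e ∈ M, ∃ y x, y ∉ I ∧ x ∈ I ∧ e = s(y, x) := by
    intro e he
    obtain ⟨hye, hyI⟩ := hpickmem e he
    obtain ⟨x, hex⟩ := Sym2.mem_iff_exists.mp hye
    refine ⟨pickOut I e, x, hyI, ?_, hex⟩
    by_contra hxI
    have hx : x ∈ Iᶜ := hxI
    rw [← himg] at hx
    obtain ⟨e', he', hpe'⟩ := hx
    have hxe : x ∈ e := by rw [hex]; simp [Sym2.mem_iff]
    have hxe' : x ∈ e' := hpe' ▸ (hpickmem e' he').1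
    have : e' = e := matching_unique hM.1 he' he hxe' hxe
    rw [this] at hpe'
    have hadj : G.Adj (pickOut I e) x := (SimpleGraph.mem_edgeSet G).mp (hex ▸ hM.1.1 he)
    exact hadj.ne hpe'
  refine ⟨?_, claim2⟩
  intro y hy
  have hy' : y ∈ Iᶜ := hy
  rw [← himg] at hy'
  obtain ⟨e, he, hpe⟩ := hy'
  obtain ⟨x, hex⟩ := Sym2.mem_iff_exists.mp (hpe ▸ (hpickmem e he).1)
  obtain ⟨y', x', hy'I, hx'I, hee⟩ := claim2 e he
  rw [hex] at hee
  rcases Sym2.eq_iff.mp hee with ⟨h1, h2⟩ | ⟨h1, h2⟩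
  · exact ⟨x, h2 ▸ hx'I, hex ▸ he⟩
  · exact absurd (h1 ▸ hx'I) hy

lemma rel_has_min (r : V → V → Prop) (hacyc : ∀ v, ¬ Relation.TransGen r v v)
    (s : Finset V) : s.Nonempty → ∃ m ∈ s, ∀ x ∈ s, ¬ Relation.TransGen r x m := by
  classical
  induction s using Finset.strongInduction with
  | _ s ih =>
    intro hs
    obtain ⟨a, ha⟩ := hs
    by_cases hmin : ∀ x ∈ s, ¬ Relation.TransGen r x a
    · exact ⟨a, ha, hmin⟩
    · push_neg at hmin
      obtain ⟨x₀, hx₀s, hx₀⟩ := hmin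
      set s' := s.filter (fun z => Relation.TransGen r z a) with hs'
      have hsub : s' ⊂ s := by
        refine ⟨Finset.filter_subset _ _, fun hss => ?_⟩
        exact hacyc a (Finset.mem_filter.mp (hss ha)).2
      have hne' : s'.Nonempty := ⟨x₀, Finset.mem_filter.mpr ⟨hx₀s, hx₀⟩⟩
      obtain ⟨m, hm, hmmin⟩ := ih s' hsub hne'
      refine ⟨m, Finset.filter_subset _ _ hm, ?_⟩
      intro x hx hxm
      have hma : Relation.TransGen r m a := (Finset.mem_filter.mp hm).2
      exact hmmin x (Finset.mem_filter.mpr ⟨hx, hxm.trans hma⟩) hxm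

lemma topo_sort (r : V → V → Prop) (hacyc : ∀ v, ¬ Relation.TransGen r v v)
    (s : Finset V) : ∃ l : List V, l.Nodup ∧ (∀ x, x ∈ l ↔ x ∈ s) ∧
      l.Pairwise (fun a b => ¬ Relation.TransGen r b a) := by
  classical
  induction s using Finset.strongInduction with
  | _ s ih =>
    rcases s.eq_empty_or_nonempty with rfl | hne
    · exact ⟨[], List.nodup_nil, by simp, List.Pairwise.nil⟩
    · obtain ⟨m, hm, hmin⟩ := rel_has_min r hacyc s hne
      obtain ⟨l, hnd, hmem, hpw⟩ := ih (s.erase m) (Finset.erase_ssubset hm)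
      refine ⟨m :: l, ?_, ?_, ?_⟩
      · exact List.nodup_cons.mpr ⟨fun hc => (Finset.notMem_erase m s) ((hmem m).mp hc), hnd⟩
      · intro x
        simp only [List.mem_cons, hmem, Finset.mem_erase]
        constructor
        · rintro (rfl | ⟨_, h⟩)
          exacts [hm, h]
        · intro hx
          by_cases hxm : x = m
          · exact Or.inl hxm
          · exact Or.inr ⟨hxm, hx⟩
      · refine List.pairwise_cons.mpr ⟨?_, hpw⟩
        intro b hb
        exact hmin b (Finset.mem_of_mem_erase ((hmem b).mp hb))

lemma forward [Fintype V] {G : SimpleGraph V} {I : Set V} {l : List V}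
    (hI : IsMaximumIndepSet G I) (hacc : IsAccessibilityOrdering G I l) :
    IsMaximumMatching G (Msigma G l) ∧ UniquelyRestricted G (Msigma G l) := by
  classical
  obtain ⟨hnd, hIl, hmatch⟩ := hacc
  set M := Msigma G l with hMdef
  have hgetI : ∀ i : Fin l.length, l.get i ∈ I := by
    intro i
    rw [← hIl]
    show l.get i ∈ l
    exact List.get_mem l i
  have hyout : ∀ {y : V} {i : Fin l.length}, G.Adj (l.get i) y → y ∉ I :=
    fun {y} {i} hadj hyI => hI.1 _ (hgetI i) y hyI hadj
  -- every vertex outside I is covered by M with partner in I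
  have hcover : ∀ y, y ∉ I → ∃ i : Fin l.length, s(y, l.get i) ∈ M ∧ G.Adj (l.get i) y := by
    intro y hy
    obtain ⟨x, hxI, hadj⟩ := max_indep_neighbor hI hy
    have hxl : x ∈ l := by rw [← hIl] at hxI; exact hxI
    obtain ⟨k, hk⟩ := List.mem_iff_get.mp hxl
    obtain ⟨i₀, hadj₀, hleast₀⟩ := exists_least_adj G l y ⟨k, hk ▸ hadj⟩
    exact ⟨i₀, ⟨i₀, y, rfl, hadj₀, hleast₀⟩, hadj₀⟩
  have hpickmem : ∀ e ∈ M, pickOut I e ∈ e ∧ pickOut I e ∉ I :=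
    fun e he => pickOut_spec (matching_edge_out hmatch hI.1 he)
  have hinj : Set.InjOn (pickOut I) M := by
    intro e he f hf hef
    exact matching_unique hmatch he hf (hpickmem e he).1 (hef ▸ (hpickmem f hf).1)
  have himg : pickOut I '' M = Iᶜ := by
    apply Set.Subset.antisymm
    · rintro v ⟨e, he, rfl⟩
      exact (hpickmem e he).2
    · intro y hy
      obtain ⟨i, heM, hadj⟩ := hcover y hy
      refine ⟨s(y, l.get i), heM, ?_⟩
      obtain ⟨hmem', hout'⟩ := hpickmem (s(y, l.get i)) heM
      rcases Sym2.mem_iff.mp hmem' with h | h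
      · exact h
      · exact absurd (hgetI i) (h ▸ hout')
  have hMcard : M.ncard = Iᶜ.ncard := by
    rw [← himg, Set.ncard_image_of_injOn hinj]
  constructor
  · refine ⟨hmatch, fun M' hM' => ?_⟩
    rw [hMcard]
    exact matching_ncard_le hM' hI.1
  -- uniquely restricted
  intro M' hM' hVeq
  by_contra hne
  have hMdiff : ∃ e ∈ M, e ∉ M' := by
    by_contra hc
    push_neg at hc
    apply hne
    apply Set.Subset.antisymm
    · intro e he
      induction e using Sym2.ind with
      | _ u v =>
        have hu : u ∈ matVerts M := by
          rw [← hVeq]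
          exact ⟨s(u, v), he, by simp⟩
        obtain ⟨f, hfM, huf⟩ := hu
        have hfM' : f ∈ M' := hc f hfM
        have : s(u, v) = f := matching_unique hM' he hfM' (by simp) huf
        exact this ▸ hfM
    · exact hc
  have hDnex : ∃ n : ℕ, ∃ hn : n < l.length,
      l.get ⟨n, hn⟩ ∈ I ∧ ∃ e ∈ M, l.get ⟨n, hn⟩ ∈ e ∧ e ∉ M' := by
    obtain ⟨e, he, heM'⟩ := hMdiff
    have he2 := he
    obtain ⟨i, y, hef, hadj, hleast⟩ := he2
    exact ⟨i, i.2, hgetI _, e, he, by rw [hef]; simp [Sym2.mem_iff], heM'⟩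
  set n₀ := Nat.find hDnex with hn₀def
  obtain ⟨hn₀, hwI, e, heM, hwe, heM'⟩ := Nat.find_spec hDnex
  set w := l.get ⟨n₀, hn₀⟩ with hwdef
  -- e = s(y₀, w) with y₀ ∉ I
  have heM2 := heM
  obtain ⟨i, y₀, hef, hadjy₀, hleasty₀⟩ := heM2
  have hy₀I : y₀ ∉ I := hyout hadjy₀
  have hwi : l.get i = w := by
    rcases Sym2.mem_iff.mp (hef ▸ hwe) with h | h
    · exact absurd (h ▸ hwI) hy₀I
    · exact h.symm
  -- the M'-edge at w
  have hwMv : w ∈ matVerts M' := by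
    rw [hVeq]
    exact ⟨e, heM, hwe⟩
  obtain ⟨e', he'M', hwe'⟩ := hwMv
  obtain ⟨u, he'⟩ := Sym2.mem_iff_exists.mp hwe'
  have he'ne : e' ≠ e := fun h => heM' (h ▸ he'M')
  have hadj_wu : G.Adj w u := (SimpleGraph.mem_edgeSet G).mp (he' ▸ hM'.1 he'M')
  have huI : u ∉ I := fun hu => hI.1 w hwI u hu hadj_wu
  have huy₀ : u ≠ y₀ := by
    rintro rfl
    apply he'ne
    rw [he', hef, hwi, Sym2.eq_swap]
  -- the M-edge at u
  have huMv : u ∈ matVerts M := by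
    rw [← hVeq]
    exact ⟨e', he'M', by rw [he']; simp [Sym2.mem_iff]⟩
  obtain ⟨f, hfM, huf⟩ := huMv
  have hfM2 := hfM
  obtain ⟨j, y₁, hff, hadjf, hleastf⟩ := hfM2
  have hy₁u : y₁ = u := by
    rcases Sym2.mem_iff.mp (hff ▸ huf) with h | h
    · exact h.symm
    · exact absurd (h ▸ hgetI j) huI
  rw [hy₁u] at hff hadjf hleastf
  -- j ≤ n₀
  have hadj_n₀u : G.Adj (l.get ⟨n₀, hn₀⟩) u := hadj_wu
  have hjle : (j : ℕ) ≤ n₀ := by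
    by_contra hlt
    push_neg at hlt
    exact hleastf ⟨n₀, hn₀⟩ hlt hadj_n₀u
  have hwne : l.get j ≠ w := by
    intro h
    have hfe : f = e := matching_unique hmatch hfM heM (by rw [hff, h]; simp [Sym2.mem_iff]) hwe
    have : u ∈ e := by rw [← hfe, hff]; simp [Sym2.mem_iff]
    rw [hef] at this
    rcases Sym2.mem_iff.mp this with h' | h'
    · exact huy₀ h'
    · rw [hwi] at h'
      exact absurd (h' ▸ hwI) huI
  have hjlt : (j : ℕ) < n₀ := by
    rcases lt_or_eq_of_le hjle with h | h
    · exact h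
    · exfalso
      apply hwne
      rw [hwdef]
      congr 1
      exact Fin.ext h
  -- f ∉ M'
  have hfM'notin : f ∉ M' := by
    intro hfin
    have hfe' : f ≠ e' := by
      intro h
      have : w ∈ f := by rw [h, he']; simp
      rw [hff] at this
      rcases Sym2.mem_iff.mp this with h' | h'
      · exact absurd (h' ▸ hwI) huI
      · exact hwne h'.symm
    have hu_f : u ∈ f := by rw [hff]; simp
    have hu_e' : u ∈ e' := by rw [he']; simp [Sym2.mem_iff]
    exact hM'.2 f hfin e' he'M' hfe' u hu_f hu_e'
  -- contradiction with minimality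
  have : ∃ hj : (j : ℕ) < l.length, l.get ⟨(j : ℕ), hj⟩ ∈ I ∧
      ∃ e ∈ M, l.get ⟨(j : ℕ), hj⟩ ∈ e ∧ e ∉ M' :=
    ⟨j.2, hgetI _, f, hfM, by rw [hff]; simp [Sym2.mem_iff], hfM'notin⟩
  exact Nat.find_min hDnex hjlt this

def accRel (G : SimpleGraph V) (I : Set V) (M : Set (Sym2 V)) (x x' : V) : Prop :=
  x ∈ I ∧ x' ∈ I ∧ x ≠ x' ∧ ∃ y, s(y, x) ∈ M ∧ G.Adj y x'

lemma no_cycle [Fintype V] {G : SimpleGraph V} {I : Set V} {M : Set (Sym2 V)}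
    (hind : IsIndepSet G I) (hmatch : IsMatchingSet G M) (hUR : UniquelyRestricted G M) :
    ∀ v, ¬ Relation.TransGen (accRel G I M) v v := by
  classical
  set r := accRel G I M with hr
  intro v hv
  set S : Set V := {x | Relation.TransGen r v x ∧ Relation.TransGen r x v} with hS
  have hvS : v ∈ S := ⟨hv, hv⟩
  have hpredex : ∀ x, ∃ c, x ∈ S → (c ∈ S ∧ r c x) := by
    intro x
    by_cases hx : x ∈ S
    · obtain ⟨c, hvc, hcx⟩ := Relation.TransGen.tail'_iff.mp hx.1
      have hcS : c ∈ S := by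
        constructor
        · rcases Relation.ReflTransGen.cases_head hvc with h | ⟨d, hvd, hdc⟩
          · rw [← h]; exact hv
          · exact Relation.TransGen.head' hvd hdc
        · exact (Relation.TransGen.single hcx).trans hx.2
      exact ⟨c, fun _ => ⟨hcS, hcx⟩⟩
    · exact ⟨x, fun h => absurd h hx⟩
  choose pred hpred using hpredex
  set f : ℕ → V := fun n => pred^[n] v with hf
  have hfsucc : ∀ n, f (n + 1) = pred (f n) := fun n => Function.iterate_succ_apply' pred n v
  have hfS : ∀ n, f n ∈ S := by
    intro n
    induction n with
    | zero => exact hvS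
    | succ k ihk => rw [hfsucc k]; exact (hpred (f k) ihk).1
  have hfr : ∀ n, r (f (n + 1)) (f n) := by
    intro n
    rw [hfsucc n]
    exact (hpred (f n) (hfS n)).2
  obtain ⟨i, j, hij, hfeq⟩ := Finite.exists_ne_map_eq_of_infinite f
  have hPex : ∃ jj, ∃ ii, ii < jj ∧ f ii = f jj := by
    rcases lt_or_gt_of_ne hij with h | h
    · exact ⟨j, i, h, hfeq⟩
    · exact ⟨i, j, h, hfeq.symm⟩
  set j₀ := Nat.find hPex with hj₀
  obtain ⟨i₀, hi₀, hfij⟩ := Nat.find_spec hPex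
  set n := j₀ - i₀ with hn
  set g : ℕ → V := fun k => f (i₀ + k) with hg
  have hn1 : 1 ≤ n := by omega
  have hg0 : g n = g 0 := by
    rw [hg]
    simp only
    rw [show i₀ + n = j₀ by omega, Nat.add_zero]
    exact hfij.symm
  have hginj : ∀ a b, a < b → b < n → g a ≠ g b := by
    intro a b hab hbn heq
    have hblt : i₀ + b < j₀ := by omega
    exact Nat.find_min hPex hblt ⟨i₀ + a, by omega, heq⟩
  have hginj' : ∀ a b, a < n → b < n → g a = g b → a = b := by
    intro a b ha hb h
    rcases lt_trichotomy a b with hh | hh | hh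
    · exact absurd h (hginj a b hh hb)
    · exact hh
    · exact absurd h.symm (hginj b a hh ha)
  have hgr : ∀ k, r (g (k + 1)) (g k) := by
    intro k
    have := hfr (i₀ + k)
    rw [hg]
    simp only
    rw [show i₀ + (k + 1) = i₀ + k + 1 by omega]
    exact this
  have hgI : ∀ k, g k ∈ I := fun k => (hgr k).2.1
  have hy' : ∀ k, ∃ y, s(y, g (k + 1)) ∈ M ∧ G.Adj y (g k) := fun k => (hgr k).2.2.2
  choose y hy using hy'
  have hyadjM : ∀ k, G.Adj (y k) (g (k + 1)) :=
    fun k => (SimpleGraph.mem_edgeSet G).mp (hmatch.1 (hy k).1)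
  have hyI : ∀ k, y k ∉ I := fun k hk => hind _ hk _ (hgI (k + 1)) (hyadjM k)
  have hshiftinj : ∀ a b, a < n → b < n → g (a + 1) = g (b + 1) → a = b := by
    intro a b ha hb heq
    rcases lt_or_eq_of_le (Nat.succ_le_of_lt ha) with ha' | ha' <;>
      rcases lt_or_eq_of_le (Nat.succ_le_of_lt hb) with hb' | hb'
    · exact Nat.succ_injective (hginj' _ _ ha' hb' heq)
    · exfalso
      have h1 : g (b + 1) = g 0 := by rw [show b + 1 = n by omega]; exact hg0
      rw [h1] at heq
      exact hginj 0 (a + 1) (by omega) (by omega) heq.symm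
    · exfalso
      have h1 : g (a + 1) = g 0 := by rw [show a + 1 = n by omega]; exact hg0
      rw [h1] at heq
      exact hginj 0 (b + 1) (by omega) (by omega) heq
    · omega
  have hyinj : ∀ a b, a < n → b < n → y a = y b → a = b := by
    intro a b ha hb heq
    have hedge : s(y a, g (a + 1)) = s(y b, g (b + 1)) :=
      matching_unique hmatch (hy a).1 (hy b).1 (show y a ∈ s(y a, g (a + 1)) by simp)
        (show y a ∈ s(y b, g (b + 1)) by rw [heq]; simp)
    rcases Sym2.eq_iff.mp hedge with ⟨_, h2⟩ | ⟨h1, _⟩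
    · exact hshiftinj a b ha hb h2
    · exact absurd (h1 ▸ hgI (b + 1)) (hyI a)
  -- construct the alternative matching
  set R : Set (Sym2 V) := {e | ∃ k, k < n ∧ e = s(y k, g (k + 1))} with hR
  set Aset : Set (Sym2 V) := {e | ∃ k, k < n ∧ e = s(y k, g k)} with hA
  have hMy : ∀ k, ∀ e ∈ M, y k ∈ e → e = s(y k, g (k + 1)) :=
    fun k e he hye => matching_unique hmatch he (hy k).1 hye (by simp)
  have hprev : ∀ k, k < n → ∃ p, p < n ∧ g (p + 1) = g k := by
    intro k hk
    rcases Nat.eq_zero_or_pos k with rfl | hpos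
    · exact ⟨n - 1, by omega, by rw [show n - 1 + 1 = n by omega]; exact hg0⟩
    · exact ⟨k - 1, by omega, by rw [show k - 1 + 1 = k by omega]⟩
  have hMg : ∀ k, k < n → ∀ e ∈ M, g k ∈ e → ∃ p, p < n ∧ e = s(y p, g (p + 1)) := by
    intro k hk e he hge
    obtain ⟨p, hp, hpe⟩ := hprev k hk
    refine ⟨p, hp, matching_unique hmatch he (hy p).1 hge ?_⟩
    rw [hpe]
    simp [Sym2.mem_iff]
  set M' : Set (Sym2 V) := (M \ R) ∪ Aset with hM'def
  have hdisj1 : ∀ e, e ∈ M \ R → ∀ k, k < n → ∀ v', v' ∈ e → v' ∈ s(y k, g k) → False := by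
    rintro e ⟨heM, heR⟩ k hk v' hv' hv''
    rcases Sym2.mem_iff.mp hv'' with rfl | rfl
    · exact heR ⟨k, hk, hMy k e heM hv'⟩
    · obtain ⟨p, hp, hpe⟩ := hMg k hk e heM hv'
      exact heR ⟨p, hp, hpe⟩
  have hM'match : IsMatchingSet G M' := by
    constructor
    · rintro e (⟨heM, _⟩ | ⟨k, hk, rfl⟩)
      · exact hmatch.1 heM
      · exact (SimpleGraph.mem_edgeSet G).mpr (hy k).2
    · rintro e he f hf hne v' hv' hv''
      rcases he with he | ⟨a, ha, rfl⟩ <;> rcases hf with hf | ⟨b, hb, rfl⟩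
      · exact hmatch.2 e he.1 f hf.1 hne v' hv' hv''
      · exact hdisj1 e he b hb v' hv' hv''
      · exact hdisj1 f hf a ha v' hv'' hv'
      · rcases Sym2.mem_iff.mp hv' with rfl | rfl <;> rcases Sym2.mem_iff.mp hv'' with h | h
        · exact hne (by rw [hyinj a b ha hb h])
        · exact (hyI a) (h ▸ hgI b)
        · exact (hyI b) (h.symm ▸ hgI a)
        · exact hne (by rw [hginj' a b ha hb h])
  have hVerts : matVerts M' = matVerts M := by
    ext v'
    constructor
    · rintro ⟨e, he | ⟨k, hk, rfl⟩, hv'⟩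
      · exact ⟨e, he.1, hv'⟩
      · rcases Sym2.mem_iff.mp hv' with rfl | rfl
        · exact ⟨s(y k, g (k + 1)), (hy k).1, by simp⟩
        · obtain ⟨p, hp, hpe⟩ := hprev k hk
          exact ⟨s(y p, g (p + 1)), (hy p).1, by rw [hpe]; simp [Sym2.mem_iff]⟩
    · rintro ⟨e, heM, hv'⟩
      by_cases heR : e ∈ R
      · obtain ⟨k, hk, rfl⟩ := heR
        rcases Sym2.mem_iff.mp hv' with rfl | rfl
        · exact ⟨s(y k, g k), Or.inr ⟨k, hk, rfl⟩, by simp⟩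
        · have hcase : k + 1 < n ∨ k + 1 = n := by omega
          rcases hcase with h | h
          · exact ⟨s(y (k + 1), g (k + 1)), Or.inr ⟨k + 1, h, rfl⟩, by simp [Sym2.mem_iff]⟩
          · refine ⟨s(y 0, g 0), Or.inr ⟨0, by omega, rfl⟩, ?_⟩
            have : g (k + 1) = g 0 := by rw [h]; exact hg0
            rw [this]
            simp [Sym2.mem_iff]
      · exact ⟨e, Or.inl ⟨heM, heR⟩, hv'⟩
  have hM'ne : M' ≠ M := by
    intro heq
    have h0 : s(y 0, g 0) ∈ M' := Or.inr ⟨0, by omega, rfl⟩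
    rw [heq] at h0
    have := hMy 0 _ h0 (by simp)
    rcases Sym2.eq_iff.mp this with ⟨_, h2⟩ | ⟨h1, _⟩
    · exact (hgr 0).2.2.1 h2.symm
    · exact (hyI 0) (by rw [h1]; exact hgI (0 + 1))
  exact hM'ne (hUR M' hM'match hVerts)

lemma backward [Fintype V] {G : SimpleGraph V} {A B : Set V} (hbip : IsBipartition G A B)
    {M : Set (Sym2 V)} (hM : IsMaximumMatching G M) (hUR : UniquelyRestricted G M)
    {I : Set V} (hI : IsMaximumIndepSet G I) :
    ∃ l, IsAccessibilityOrdering G I l ∧ Msigma G l = M := by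
  classical
  obtain ⟨h1, h2⟩ := cover_lemma hbip hI hM
  have hacyc := no_cycle hI.1 hM.1 hUR
  obtain ⟨l, hnd, hmem, hpw⟩ := topo_sort (accRel G I M) hacyc I.toFinset
  have hmem' : ∀ x, x ∈ l ↔ x ∈ I := fun x => (hmem x).trans Set.mem_toFinset
  have hIl : {v | v ∈ l} = I := Set.ext hmem'
  have hgetI : ∀ i : Fin l.length, l.get i ∈ I :=
    fun i => (hmem' _).mp (List.get_mem l i)
  have hpw' := List.pairwise_iff_get.mp hpw
  have hfirst : ∀ y, y ∉ I → ∀ i : Fin l.length, G.Adj (l.get i) y →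
      (∀ j : Fin l.length, (j : ℕ) < (i : ℕ) → ¬ G.Adj (l.get j) y) → s(y, l.get i) ∈ M := by
    intro y hy i hadj hleast
    obtain ⟨x, hxI, hxM⟩ := h1 y hy
    have hadjyx : G.Adj y x := (SimpleGraph.mem_edgeSet G).mp (hM.1.1 hxM)
    by_cases hxi : l.get i = x
    · rw [hxi]; exact hxM
    · exfalso
      have hrx : accRel G I M x (l.get i) :=
        ⟨hxI, hgetI i, fun h => hxi h.symm, y, hxM, hadj.symm⟩
      obtain ⟨k, hk⟩ := List.mem_iff_get.mp ((hmem' x).mpr hxI)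
      have hki : (k : ℕ) ≠ (i : ℕ) := by
        intro h
        exact hxi (by rw [← hk]; congr 1; exact Fin.ext h.symm)
      rcases lt_or_gt_of_ne hki with hlt | hgt
      · exact hleast k hlt (hk ▸ hadjyx.symm)
      · exact hpw' i k hgt (Relation.TransGen.single (by rw [hk]; exact hrx))
  have hMs : Msigma G l = M := by
    apply Set.Subset.antisymm
    · rintro e ⟨i, y, rfl, hadj, hleast⟩
      have hy : y ∉ I := fun hyI => hI.1 _ (hgetI i) y hyI hadj
      exact hfirst y hy i hadj hleast
    · intro e heM
      obtain ⟨y, x, hyI, hxI, rfl⟩ := h2 e heM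
      have hadjyx : G.Adj y x := (SimpleGraph.mem_edgeSet G).mp (hM.1.1 heM)
      obtain ⟨k, hk⟩ := List.mem_iff_get.mp ((hmem' x).mpr hxI)
      obtain ⟨i₀, hadj₀, hleast₀⟩ := exists_least_adj G l y ⟨k, hk ▸ hadjyx.symm⟩
      have hin : s(y, l.get i₀) ∈ M := hfirst y hyI i₀ hadj₀ hleast₀
      have heq : s(y, x) = s(y, l.get i₀) :=
        matching_unique hM.1 heM hin (show y ∈ s(y, x) by simp) (show y ∈ s(y, l.get i₀) by simp)
      rw [heq]
      exact ⟨i₀, y, rfl, hadj₀, hleast₀⟩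
  exact ⟨l, ⟨hnd, hIl, by rw [hMs]; exact hM.1⟩, hMs⟩

/-- Equivalence of (i) some maximum independent set has an `E`-good accessibility
ordering, (ii) `G` has a uniquely restricted maximum matching inside `E`, and
(iii) every maximum independent set has an `E`-good accessibility ordering. -/
theorem stmt5 [Fintype V] (G : SimpleGraph V) (A B : Set V) (hbip : IsBipartition G A B)
    (E : Set (Sym2 V)) :
    ((∃ I, IsMaximumIndepSet G I ∧ ∃ l, IsAccessibilityOrdering G I l ∧ Msigma G l ⊆ E) ↔
      (∃ M, IsMaximumMatching G M ∧ UniquelyRestricted G M ∧ M ⊆ E)) ∧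
    ((∃ M, IsMaximumMatching G M ∧ UniquelyRestricted G M ∧ M ⊆ E) ↔
      (∀ I, IsMaximumIndepSet G I → ∃ l, IsAccessibilityOrdering G I l ∧ Msigma G l ⊆ E)) := by
  constructor
  · constructor
    · rintro ⟨I, hI, l, hacc, hE⟩
      obtain ⟨hmax, hur⟩ := forward hI hacc
      exact ⟨Msigma G l, hmax, hur, hE⟩
    · rintro ⟨M, hM, hur, hME⟩
      obtain ⟨I, hI⟩ := exists_max_indep G
      obtain ⟨l, hacc, hMs⟩ := backward hbip hM hur hI
      exact ⟨I, hI, l, hacc, by rw [hMs]; exact hME⟩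
  · constructor
    · rintro ⟨M, hM, hur, hME⟩ I hI
      obtain ⟨l, hacc, hMs⟩ := backward hbip hM hur hI
      exact ⟨l, hacc, by rw [hMs]; exact hME⟩
    · intro h
      obtain ⟨I, hI⟩ := exists_max_indep G
      obtain ⟨l, hacc, hE⟩ := h I hI
      obtain ⟨hmax, hur⟩ := forward hI hacc
      exact ⟨Msigma G l, hmax, hur, hE⟩
end

section
/- Let M and M' be maximum matchings in a bipartite graph G with parts A, B. Then V^+(M') = V^+(M) and V^-(M') = V^-(M), where V^+(M) is the set of vertices reachable in D(M) by a directed path from some vertex of A uncovered by M, and V^-(M) is the set of vertices from which some vertex of B uncovered by M is reachable by a directed path in D(M). -/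
variable {V : Type*}

section Aux

variable {G : SimpleGraph V} {A B : Set V}

lemma matching_insert {N : Set (Sym2 V)} (hN : IsMatchingSet G N) {a b : V}
    (hab : G.Adj a b) (ha : a ∉ matVerts N) (hb : b ∉ matVerts N) :
    IsMatchingSet G (insert s(a, b) N) := by
  constructor
  · exact Set.insert_subset (G.mem_edgeSet.2 hab) hN.1
  · rintro e he f hf hef v hv
    rcases he with rfl | he <;> rcases hf with rfl | hf
    · exact absurd rfl hef
    · rcases Sym2.mem_iff.1 hv with rfl | rfl
      · exact fun h => ha ⟨f, hf, h⟩
      · exact fun h => hb ⟨f, hf, h⟩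
    · intro h
      rcases Sym2.mem_iff.1 h with rfl | rfl
      · exact ha ⟨e, he, hv⟩
      · exact hb ⟨e, he, hv⟩
    · exact hN.2 e he f hf hef v hv

lemma exchange [Fintype V] {N : Set (Sym2 V)} (hN : IsMaximumMatching G N) {a a' b : V}
    (ha : a ∉ matVerts N) (hf : s(a', b) ∈ N) (hab : G.Adj a b) :
    IsMaximumMatching G ((N \ {s(a', b)}) ∪ {s(a, b)}) ∧
      a' ∉ matVerts ((N \ {s(a', b)}) ∪ {s(a, b)}) := by
  have ha'b : G.Adj a' b := G.mem_edgeSet.1 (hN.1.1 hf)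
  have haa' : a ≠ a' := fun h => ha ⟨s(a', b), hf, by rw [h]; exact Sym2.mem_mk_left _ _⟩
  have heN : s(a, b) ∉ N := fun h => ha ⟨s(a, b), h, Sym2.mem_mk_left _ _⟩
  have hnef : s(a, b) ≠ s(a', b) := by
    intro h
    rw [Sym2.eq_iff] at h
    rcases h with ⟨h1, -⟩ | ⟨h2, -⟩
    · exact haa' h1
    · exact hab.ne h2
  have hmatch : IsMatchingSet G ((N \ {s(a', b)}) ∪ {s(a, b)}) := by
    constructor
    · rintro e (⟨he, -⟩ | he)
      · exact hN.1.1 he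
      · rw [Set.mem_singleton_iff] at he; subst he; exact G.mem_edgeSet.2 hab
    · rintro e (⟨he, hef⟩ | he) f (⟨hf2, hff⟩ | hf2) hne v hv
      · exact hN.1.2 e he f hf2 hne v hv
      · rw [Set.mem_singleton_iff] at hf2; subst hf2
        intro hvf
        rcases Sym2.mem_iff.1 hvf with h1 | h2
        · subst h1; exact ha ⟨e, he, hv⟩
        · subst h2
          exact hN.1.2 s(a', v) hf e he (fun h => hef (by rw [← h]; rfl)) v
            (Sym2.mem_mk_right _ _) hv
      · rw [Set.mem_singleton_iff] at he; subst he
        rcases Sym2.mem_iff.1 hv with h1 | h2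
        · subst h1; exact fun h => ha ⟨f, hf2, h⟩
        · subst h2
          exact hN.1.2 s(a', v) hf f hf2 (fun h => hff (by rw [← h]; rfl)) v
            (Sym2.mem_mk_right _ _)
      · rw [Set.mem_singleton_iff] at he hf2; subst he; subst hf2; exact absurd rfl hne
  have hcard : ((N \ {s(a', b)}) ∪ {s(a, b)}).ncard = N.ncard := by
    rw [Set.union_singleton, Set.ncard_insert_of_notMem (by simp [heN]) (Set.toFinite _),
      Set.ncard_diff_singleton_add_one hf (Set.toFinite _)]
  refine ⟨⟨hmatch, fun M'' h => (hN.2 M'' h).trans_eq hcard.symm⟩, ?_⟩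
  rintro ⟨e, (⟨he, hef⟩ | he), hae⟩
  · exact hN.1.2 s(a', b) hf e he (fun h => hef (by rw [← h]; rfl)) a'
      (Sym2.mem_mk_left _ _) hae
  · rw [Set.mem_singleton_iff] at he; subst he
    rcases Sym2.mem_iff.1 hae with h1 | h2
    · exact haa' h1.symm
    · exact ha'b.ne h2



lemma toWalk {M : Set (Sym2 V)} {u v : V}
    (h : Relation.ReflTransGen (DMarc G A B M) u v) :
    ∃ p : G.Walk u v, ∀ d ∈ p.darts, DMarc G A B M d.toProd.1 d.toProd.2 := by
  induction h with
  | refl => exact ⟨SimpleGraph.Walk.nil, by simp⟩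
  | tail _ hstep ih =>
    obtain ⟨p, hp⟩ := ih
    refine ⟨p.concat hstep.1, ?_⟩
    intro d hd
    rw [SimpleGraph.Walk.darts_concat, List.concat_eq_append, List.mem_append,
      List.mem_singleton] at hd
    rcases hd with hd | rfl
    · exact hp d hd
    · exact hstep

lemma core [Fintype V] (hbip : IsBipartition G A B) :
    ∀ (n : ℕ) (M : Set (Sym2 V)) (a0 v : V) (p : G.Walk a0 v), p.length = n →
      p.IsPath → (∀ d ∈ p.darts, DMarc G A B M d.toProd.1 d.toProd.2) →
      IsMaximumMatching G M → a0 ∈ A → a0 ∉ matVerts M → v ∈ A →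
      ∃ N, IsMaximumMatching G N ∧ v ∉ matVerts N := by
  intro n
  induction n using Nat.strong_induction_on with
  | _ n ih =>
  intro M a0 v p hlen hp hd hM ha0 hum hv
  have hAB : ∀ {x : V}, x ∈ A → x ∉ B := fun hx => Set.disjoint_left.mp hbip.1 hx
  cases p with
  | nil => exact ⟨M, hM, hum⟩
  | @cons _ b _ h q =>
    have hd1 : DMarc G A B M a0 b := hd ⟨(a0, b), h⟩ (by simp)
    have hbB : b ∈ B := by
      rcases hd1.2 with ⟨-, hbB, -⟩ | ⟨ha0B, -⟩
      · exact hbB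
      · exact absurd ha0B (hAB ha0)
    have he0 : s(a0, b) ∉ M := by
      rcases hd1.2 with ⟨-, -, h1⟩ | ⟨ha0B, -⟩
      · exact h1
      · exact absurd ha0B (hAB ha0)
    cases q with
    | nil => exact absurd hv (fun hh => hAB hh hbB)
    | @cons _ a1 _ h' q' =>
      have hd2 : DMarc G A B M b a1 := hd ⟨(b, a1), h'⟩ (by simp)
      obtain ⟨ha1A, hfM⟩ : a1 ∈ A ∧ s(a1, b) ∈ M := by
        rcases hd2.2 with ⟨hbA, -⟩ | ⟨-, ha1A, hm⟩
        · exact absurd hbA (fun hh => hAB hh hbB)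
        · exact ⟨ha1A, by rwa [Sym2.eq_swap] at hm⟩
      rw [SimpleGraph.Walk.cons_isPath_iff] at hp
      obtain ⟨hp2, ha0s⟩ := hp
      rw [SimpleGraph.Walk.cons_isPath_iff] at hp2
      obtain ⟨hp', hbs⟩ := hp2
      have ha0s' : a0 ∉ q'.support := fun hh => ha0s (by simp [hh])
      obtain ⟨hM1, ha1um⟩ := exchange hM hum hfM h
      set M1 := (M \ {s(a1, b)}) ∪ {s(a0, b)} with hM1def
      have hdarts : ∀ d ∈ q'.darts, DMarc G A B M1 d.toProd.1 d.toProd.2 := by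
        intro d hdq
        have hdM : DMarc G A B M d.toProd.1 d.toProd.2 := hd d (by simp [hdq])
        have hf1 : d.toProd.1 ∈ q'.support :=
          SimpleGraph.Walk.dart_fst_mem_support_of_mem_darts _ hdq
        have hf2 : d.toProd.2 ∈ q'.support :=
          SimpleGraph.Walk.dart_snd_mem_support_of_mem_darts _ hdq
        have hne1 : s(d.toProd.1, d.toProd.2) ≠ s(a1, b) := by
          intro hh
          rw [Sym2.eq_iff] at hh
          rcases hh with ⟨-, h2⟩ | ⟨h1, -⟩
          · exact hbs (h2 ▸ hf2)
          · exact hbs (h1 ▸ hf1)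
        have hne2 : s(d.toProd.1, d.toProd.2) ≠ s(a0, b) := by
          intro hh
          rw [Sym2.eq_iff] at hh
          rcases hh with ⟨h1, -⟩ | ⟨-, h2⟩
          · exact ha0s' (h1 ▸ hf1)
          · exact ha0s' (h2 ▸ hf2)
        have hmem : s(d.toProd.1, d.toProd.2) ∈ M1 ↔ s(d.toProd.1, d.toProd.2) ∈ M := by
          simp only [hM1def, Set.mem_union, Set.mem_diff, Set.mem_singleton_iff]
          simp [hne1, hne2]
        refine ⟨hdM.1, ?_⟩
        rcases hdM.2 with ⟨x1, x2, x3⟩ | ⟨x1, x2, x3⟩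
        · exact Or.inl ⟨x1, x2, fun hh => x3 (hmem.1 hh)⟩
        · exact Or.inr ⟨x1, x2, hmem.2 x3⟩
      exact ih q'.length (by simp [SimpleGraph.Walk.length_cons] at hlen; omega) M1 a1 v q' rfl hp' hdarts hM1 ha1A ha1um hv

lemma lem1 [Fintype V] (hbip : IsBipartition G A B) {M : Set (Sym2 V)}
    (hM : IsMaximumMatching G M) {v : V} (hv : v ∈ A) (hvp : v ∈ Vplus G A B M) :
    ∃ N, IsMaximumMatching G N ∧ v ∉ matVerts N := by
  classical
  obtain ⟨a0, ha0A, ha0um, hwalk⟩ := hvp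
  obtain ⟨p, hp⟩ := toWalk hwalk
  exact core hbip p.bypass.length M a0 v p.bypass rfl p.bypass_isPath
    (fun d hd => hp d (p.darts_bypass_subset hd)) hM ha0A ha0um hv

lemma lem2 [Fintype V] (hbip : IsBipartition G A B) {M : Set (Sym2 V)}
    (hM : IsMaximumMatching G M) :
    ∀ (n : ℕ) (N : Set (Sym2 V)), (N \ M).ncard = n → IsMaximumMatching G N →
      ∀ a ∈ A, a ∉ matVerts N → a ∈ Vplus G A B M := by
  intro n
  induction n using Nat.strong_induction_on with
  | _ n ih =>
  intro N hn hN a haA haN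
  by_cases hamM : a ∈ matVerts M
  · obtain ⟨e, heM, hae⟩ := hamM
    obtain ⟨b, rfl⟩ := Sym2.mem_iff_exists.1 hae
    have hadj : G.Adj a b := G.mem_edgeSet.1 (hM.1.1 heM)
    have hbB : b ∈ B := by
      rcases hbip.2.2 hadj with ⟨-, hb⟩ | ⟨ha', -⟩
      · exact hb
      · exact absurd ha' (fun hh => Set.disjoint_left.mp hbip.1 haA hh)
    have habN : s(a, b) ∉ N := fun hh => haN ⟨_, hh, Sym2.mem_mk_left _ _⟩
    -- b must be matched in N
    have hbN : b ∈ matVerts N := by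
      by_contra hbN
      have hmm := matching_insert hN.1 hadj haN hbN
      have hle := hN.2 _ hmm
      rw [Set.ncard_insert_of_notMem habN (Set.toFinite _)] at hle
      omega
    obtain ⟨f, hfN, hbf⟩ := hbN
    obtain ⟨a', rfl⟩ := Sym2.mem_iff_exists.1 hbf
    have hadj' : G.Adj b a' := G.mem_edgeSet.1 (hN.1.1 hfN)
    have ha'A : a' ∈ A := by
      rcases hbip.2.2 hadj' with ⟨hb', -⟩ | ⟨-, ha'⟩
      · exact absurd hb' (fun hh => Set.disjoint_left.mp hbip.1 hh hbB)
      · exact ha'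
    have ha'ne : a' ≠ a := by
      rintro rfl
      exact haN ⟨_, hfN, Sym2.mem_mk_right _ _⟩
    have hfne : s(b, a') ≠ s(a, b) := by
      intro hh
      rw [Sym2.eq_iff] at hh
      rcases hh with ⟨h1, -⟩ | ⟨-, h2⟩
      · exact hadj.ne (h1.symm)
      · exact ha'ne h2
    have hfM : s(b, a') ∉ M := fun hh =>
      hM.1.2 _ heM _ hh (fun h12 => hfne h12.symm) b (Sym2.mem_mk_right _ _)
        (Sym2.mem_mk_left _ _)
    have hswap : s(b, a') = s(a', b) := Sym2.eq_swap
    obtain ⟨hN', ha'N'⟩ := exchange hN haN (hswap ▸ hfN) hadj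
    have hdec : (((N \ {s(a', b)}) ∪ {s(a, b)}) \ M).ncard < n := by
      have : ((N \ {s(a', b)}) ∪ {s(a, b)}) \ M = (N \ M) \ {s(a', b)} := by
        ext e
        simp only [Set.mem_diff, Set.mem_union, Set.mem_singleton_iff]
        constructor
        · rintro ⟨he1 | rfl, he2⟩
          · exact ⟨⟨he1.1, he2⟩, he1.2⟩
          · exact absurd heM he2
        · rintro ⟨⟨he1, he2⟩, he3⟩
          exact ⟨Or.inl ⟨he1, he3⟩, he2⟩
      rw [this, ← hn]
      exact Set.ncard_diff_singleton_lt_of_mem ⟨hswap ▸ hfN, hswap ▸ hfM⟩ (Set.toFinite _)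
    have ha'V : a' ∈ Vplus G A B M :=
      ih _ hdec _ rfl hN' a' ha'A ha'N'
    obtain ⟨a0, ha0A, ha0um, hwalk⟩ := ha'V
    refine ⟨a0, ha0A, ha0um, ?_⟩
    have step1 : DMarc G A B M a' b :=
      ⟨hadj'.symm, Or.inl ⟨ha'A, hbB, by rwa [Sym2.eq_swap] at hfM⟩⟩
    have step2 : DMarc G A B M b a :=
      ⟨hadj.symm, Or.inr ⟨hbB, haA, by rwa [Sym2.eq_swap]⟩⟩
    exact (hwalk.tail step1).tail step2
  · exact ⟨a, haA, hamM, Relation.ReflTransGen.refl⟩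

lemma vplus_char [Fintype V] (hbip : IsBipartition G A B) {M : Set (Sym2 V)}
    (hM : IsMaximumMatching G M) :
    Vplus G A B M = {v | (v ∈ A ∧ ∃ N, IsMaximumMatching G N ∧ v ∉ matVerts N) ∨
      (v ∈ B ∧ ∃ a ∈ A, G.Adj a v ∧ ∃ N, IsMaximumMatching G N ∧ a ∉ matVerts N)} := by
  have hAB : ∀ {x : V}, x ∈ A → x ∉ B := fun hx => Set.disjoint_left.mp hbip.1 hx
  ext v
  simp only [Set.mem_setOf_eq]
  constructor
  · intro hv
    have hvAB : v ∈ A ∪ B := hbip.2.1 ▸ Set.mem_univ v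
    rcases hvAB with hvA | hvB
    · exact Or.inl ⟨hvA, lem1 hbip hM hvA hv⟩
    · refine Or.inr ⟨hvB, ?_⟩
      obtain ⟨a0, ha0A, ha0um, hwalk⟩ := hv
      rcases Relation.ReflTransGen.cases_tail hwalk with rfl | ⟨c, hwc, harc⟩
      · exact absurd hvB (hAB ha0A)
      · obtain ⟨hcA, -, hcnM⟩ : c ∈ A ∧ v ∈ B ∧ s(c, v) ∉ M := by
          rcases harc.2 with hh | ⟨hcB, hvA, -⟩
          · exact hh
          · exact absurd hvB (hAB hvA)
        exact ⟨c, hcA, harc.1, lem1 hbip hM hcA ⟨a0, ha0A, ha0um, hwc⟩⟩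
  · rintro (⟨hvA, N, hN, hvN⟩ | ⟨hvB, a, haA, hadj, N, hN, haN⟩)
    · exact lem2 hbip hM _ N rfl hN v hvA hvN
    · have haV : a ∈ Vplus G A B M := lem2 hbip hM _ N rfl hN a haA haN
      by_cases hav : s(a, v) ∈ M
      · -- v is the M-partner of a; v occurs just before a on the walk
        obtain ⟨a0, ha0A, ha0um, hwalk⟩ := haV
        rcases Relation.ReflTransGen.cases_tail hwalk with rfl | ⟨c, hwc, harc⟩
        · exact absurd (⟨_, hav, Sym2.mem_mk_left _ _⟩ : a ∈ matVerts M) ha0um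
        · obtain ⟨hcB, -, hcM⟩ : c ∈ B ∧ a ∈ A ∧ s(c, a) ∈ M := by
            rcases harc.2 with ⟨hcA, haB, -⟩ | hh
            · exact absurd haB (hAB haA)
            · exact hh
          have : s(c, a) = s(a, v) := by
            by_contra hne
            exact hM.1.2 _ hcM _ hav hne a (Sym2.mem_mk_right _ _) (Sym2.mem_mk_left _ _)
          rw [Sym2.eq_iff] at this
          rcases this with ⟨h1, h2⟩ | ⟨h1, -⟩
          · exact absurd (h2 ▸ hvB) (hAB haA)
          · exact h1 ▸ ⟨a0, ha0A, ha0um, hwc⟩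
      · obtain ⟨a0, ha0A, ha0um, hwalk⟩ := haV
        exact ⟨a0, ha0A, ha0um, hwalk.tail ⟨hadj, Or.inl ⟨haA, hvB, hav⟩⟩⟩

lemma dmarc_swap (G : SimpleGraph V) (A B : Set V) (M : Set (Sym2 V)) (x y : V) :
    DMarc G B A M x y ↔ DMarc G A B M y x := by
  unfold DMarc
  rw [@Sym2.eq_swap _ x y]
  constructor
  · rintro ⟨hadj, h | h⟩
    · exact ⟨hadj.symm, Or.inl ⟨h.2.1, h.1, h.2.2⟩⟩
    · exact ⟨hadj.symm, Or.inr ⟨h.2.1, h.1, h.2.2⟩⟩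
  · rintro ⟨hadj, h | h⟩
    · exact ⟨hadj.symm, Or.inl ⟨h.2.1, h.1, h.2.2⟩⟩
    · exact ⟨hadj.symm, Or.inr ⟨h.2.1, h.1, h.2.2⟩⟩

lemma vminus_eq_vplus (G : SimpleGraph V) (A B : Set V) (M : Set (Sym2 V)) :
    Vminus G A B M = Vplus G B A M := by
  ext v
  simp only [Vminus, Vplus, Set.mem_setOf_eq]
  refine exists_congr fun b => and_congr_right fun _ => and_congr_right fun _ => ?_
  rw [show DMarc G B A M = Function.swap (DMarc G A B M) from
    funext fun x => funext fun y => propext ((dmarc_swap G A B M x y))]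
  exact (Relation.reflTransGen_swap).symm

lemma bip_swap (hbip : IsBipartition G A B) : IsBipartition G B A :=
  ⟨hbip.1.symm, by rw [Set.union_comm]; exact hbip.2.1,
    fun u v h => (hbip.2.2 h).symm⟩

end Aux

/-- Any two maximum matchings have the same `V⁺` and `V⁻`. -/
theorem stmt9 [Fintype V] (G : SimpleGraph V) (A B : Set V) (hbip : IsBipartition G A B)
    (M M' : Set (Sym2 V)) (hM : IsMaximumMatching G M) (hM' : IsMaximumMatching G M') :
    Vplus G A B M' = Vplus G A B M ∧ Vminus G A B M' = Vminus G A B M := by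
  constructor
  · rw [vplus_char hbip hM', vplus_char hbip hM]
  · rw [vminus_eq_vplus, vminus_eq_vplus,
      vplus_char (bip_swap hbip) hM', vplus_char (bip_swap hbip) hM]
end
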